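/- Let (ρ⁺, ρ⁻, V) be a classical solution of the bi-temperature drift-fluid system on [0, ∞). Then for all t ≥ 0: ‖ρ⁺(t) − μ^{good,+}‖²_{L²(Q)} − ‖ρ⁻(t) − μ^{good,−}‖²_{L²(Q)} = ‖ρ⁺(0) − μ^{good,+}‖²_{L²(Q)} − ‖ρ⁻(0) − μ^{good,−}‖²_{L²(Q)}; i.e. the difference of the squared L² distances of the hot and cold densities to their equilibrium profiles is a conserved quantity. -/

import Mathlib

open Real

/-- Time derivative of a function of `(t, x₁, x₂)`. -/
noncomputable def pt (f : ℝ → ℝ → ℝ → ℝ) (t x₁ x₂ : ℝ) : ℝ :=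
  deriv (fun s => f s x₁ x₂) t

/-- Partial derivative in `x₁` of a function of `(t, x₁, x₂)`. -/
noncomputable def px1 (f : ℝ → ℝ → ℝ → ℝ) (t x₁ x₂ : ℝ) : ℝ :=
  deriv (fun y => f t y x₂) x₁

/-- Partial derivative in `x₂` of a function of `(t, x₁, x₂)`. -/
noncomputable def px2 (f : ℝ → ℝ → ℝ → ℝ) (t x₁ x₂ : ℝ) : ℝ :=
  deriv (fun y => f t x₁ y) x₂

/-- A classical solution of the bi-temperature drift-fluid system on the time
interval `I`, posed on the strip `[0,L] × ℝ` with all unknowns `L`-periodic in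
`x₂`: smooth functions `ρ⁺, ρ⁻, V` satisfying the transport equations
`∂ₜρ^± − T^± ∂_{x₂}ρ^± + E^⊥·∇ₓρ^± = 0` with `E = −∇ₓV`, `E^⊥ = (E₂, −E₁)`,
the Poisson equation `−ΔₓV = ρ⁺ + ρ⁻ − 1`, and the Dirichlet condition
`V = 0` on `x₁ = 0, L`. -/
def IsClassicalSolution (L Tp Tm : ℝ) (I : Set ℝ)
    (ρp ρm V : ℝ → ℝ → ℝ → ℝ) : Prop :=
  ContDiff ℝ (⊤ : ℕ∞) (fun p : ℝ × ℝ × ℝ => ρp p.1 p.2.1 p.2.2) ∧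
  ContDiff ℝ (⊤ : ℕ∞) (fun p : ℝ × ℝ × ℝ => ρm p.1 p.2.1 p.2.2) ∧
  ContDiff ℝ (⊤ : ℕ∞) (fun p : ℝ × ℝ × ℝ => V p.1 p.2.1 p.2.2) ∧
  (∀ t x₁ x₂ : ℝ, ρp t x₁ (x₂ + L) = ρp t x₁ x₂) ∧
  (∀ t x₁ x₂ : ℝ, ρm t x₁ (x₂ + L) = ρm t x₁ x₂) ∧
  (∀ t x₁ x₂ : ℝ, V t x₁ (x₂ + L) = V t x₁ x₂) ∧
  (∀ t ∈ I, ∀ x₁ ∈ Set.Icc (0 : ℝ) L, ∀ x₂ : ℝ,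
    pt ρp t x₁ x₂ - Tp * px2 ρp t x₁ x₂
      + ((-(px2 V t x₁ x₂)) * px1 ρp t x₁ x₂
          + px1 V t x₁ x₂ * px2 ρp t x₁ x₂) = 0) ∧
  (∀ t ∈ I, ∀ x₁ ∈ Set.Icc (0 : ℝ) L, ∀ x₂ : ℝ,
    pt ρm t x₁ x₂ - Tm * px2 ρm t x₁ x₂
      + ((-(px2 V t x₁ x₂)) * px1 ρm t x₁ x₂
          + px1 V t x₁ x₂ * px2 ρm t x₁ x₂) = 0) ∧
  (∀ t ∈ I, ∀ x₁ ∈ Set.Icc (0 : ℝ) L, ∀ x₂ : ℝ,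
    -(px1 (px1 V) t x₁ x₂ + px2 (px2 V) t x₁ x₂)
      = ρp t x₁ x₂ + ρm t x₁ x₂ - 1) ∧
  (∀ t ∈ I, ∀ x₂ : ℝ, V t 0 x₂ = 0 ∧ V t L x₂ = 0)

namespace DriftAux

open MeasureTheory Set

abbrev uc (f : ℝ → ℝ → ℝ → ℝ) : ℝ × ℝ × ℝ → ℝ := fun p => f p.1 p.2.1 p.2.2

lemma one_le' : (1 : WithTop ℕ∞) ≤ ((⊤ : ℕ∞) : WithTop ℕ∞) := by exact_mod_cast le_top

lemma succ_le' : ((⊤ : ℕ∞) : WithTop ℕ∞) + 1 ≤ ((⊤ : ℕ∞) : WithTop ℕ∞) := by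
  exact_mod_cast le_top

variable {f : ℝ → ℝ → ℝ → ℝ}

lemma slice_t (hf : ContDiff ℝ (⊤ : ℕ∞) (uc f)) (t x₁ x₂ : ℝ) :
    HasDerivAt (fun s => f s x₁ x₂) (fderiv ℝ (uc f) (t, x₁, x₂) (1, 0, 0)) t := by
  have h := (hf.differentiable (by simp) (t, x₁, x₂)).hasFDerivAt
  have hg : HasDerivAt (fun s : ℝ => (s, x₁, x₂)) ((1 : ℝ), (0 : ℝ), (0 : ℝ)) t :=
    (hasDerivAt_id t).prodMk (hasDerivAt_const t (x₁, x₂))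
  exact h.comp_hasDerivAt t hg

lemma slice_1 (hf : ContDiff ℝ (⊤ : ℕ∞) (uc f)) (t x₁ x₂ : ℝ) :
    HasDerivAt (fun y => f t y x₂) (fderiv ℝ (uc f) (t, x₁, x₂) (0, 1, 0)) x₁ := by
  have h := (hf.differentiable (by simp) (t, x₁, x₂)).hasFDerivAt
  have hg : HasDerivAt (fun y : ℝ => (t, y, x₂)) ((0 : ℝ), (1 : ℝ), (0 : ℝ)) x₁ :=
    (hasDerivAt_const x₁ t).prodMk ((hasDerivAt_id x₁).prodMk (hasDerivAt_const x₁ x₂))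
  exact h.comp_hasDerivAt x₁ hg

lemma slice_2 (hf : ContDiff ℝ (⊤ : ℕ∞) (uc f)) (t x₁ x₂ : ℝ) :
    HasDerivAt (fun y => f t x₁ y) (fderiv ℝ (uc f) (t, x₁, x₂) (0, 0, 1)) x₂ := by
  have h := (hf.differentiable (by simp) (t, x₁, x₂)).hasFDerivAt
  have hg : HasDerivAt (fun y : ℝ => (t, x₁, y)) ((0 : ℝ), (0 : ℝ), (1 : ℝ)) x₂ :=
    (hasDerivAt_const x₂ t).prodMk ((hasDerivAt_const x₂ x₁).prodMk (hasDerivAt_id x₂))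
  exact h.comp_hasDerivAt x₂ hg

lemma hasDerivAt_pt (hf : ContDiff ℝ (⊤ : ℕ∞) (uc f)) (t x₁ x₂ : ℝ) :
    HasDerivAt (fun s => f s x₁ x₂) (pt f t x₁ x₂) t := by
  have h := slice_t hf t x₁ x₂
  have e : pt f t x₁ x₂ = fderiv ℝ (uc f) (t, x₁, x₂) (1, 0, 0) := h.deriv
  rw [e]; exact h

lemma hasDerivAt_px1 (hf : ContDiff ℝ (⊤ : ℕ∞) (uc f)) (t x₁ x₂ : ℝ) :
    HasDerivAt (fun y => f t y x₂) (px1 f t x₁ x₂) x₁ := by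
  have h := slice_1 hf t x₁ x₂
  have e : px1 f t x₁ x₂ = fderiv ℝ (uc f) (t, x₁, x₂) (0, 1, 0) := h.deriv
  rw [e]; exact h

lemma hasDerivAt_px2 (hf : ContDiff ℝ (⊤ : ℕ∞) (uc f)) (t x₁ x₂ : ℝ) :
    HasDerivAt (fun y => f t x₁ y) (px2 f t x₁ x₂) x₂ := by
  have h := slice_2 hf t x₁ x₂
  have e : px2 f t x₁ x₂ = fderiv ℝ (uc f) (t, x₁, x₂) (0, 0, 1) := h.deriv
  rw [e]; exact h

lemma contDiff_dir (hf : ContDiff ℝ (⊤ : ℕ∞) (uc f)) (v : ℝ × ℝ × ℝ) :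
    ContDiff ℝ (⊤ : ℕ∞) (fun p => fderiv ℝ (uc f) p v) :=
  (hf.fderiv_right succ_le').clm_apply contDiff_const

lemma contDiff_pt (hf : ContDiff ℝ (⊤ : ℕ∞) (uc f)) :
    ContDiff ℝ (⊤ : ℕ∞) (uc (pt f)) := by
  have e : uc (pt f) = fun p => fderiv ℝ (uc f) p (1, 0, 0) :=
    funext fun p => (slice_t hf p.1 p.2.1 p.2.2).deriv
  rw [e]; exact contDiff_dir hf _

lemma contDiff_px1 (hf : ContDiff ℝ (⊤ : ℕ∞) (uc f)) :
    ContDiff ℝ (⊤ : ℕ∞) (uc (px1 f)) := by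
  have e : uc (px1 f) = fun p => fderiv ℝ (uc f) p (0, 1, 0) :=
    funext fun p => (slice_1 hf p.1 p.2.1 p.2.2).deriv
  rw [e]; exact contDiff_dir hf _

lemma contDiff_px2 (hf : ContDiff ℝ (⊤ : ℕ∞) (uc f)) :
    ContDiff ℝ (⊤ : ℕ∞) (uc (px2 f)) := by
  have e : uc (px2 f) = fun p => fderiv ℝ (uc f) p (0, 0, 1) :=
    funext fun p => (slice_2 hf p.1 p.2.1 p.2.2).deriv
  rw [e]; exact contDiff_dir hf _

lemma schwarz (hf : ContDiff ℝ (⊤ : ℕ∞) (uc f)) (t x₁ x₂ : ℝ) :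
    px1 (px2 f) t x₁ x₂ = px2 (px1 f) t x₁ x₂ := by
  set A := fderiv ℝ (uc f) with hA_def
  have hA : ∀ y, HasFDerivAt (uc f) (A y) y := fun y =>
    (hf.differentiable (by simp) y).hasFDerivAt
  have hAc : ContDiff ℝ (⊤ : ℕ∞) A := hf.fderiv_right succ_le'
  have hA' : HasFDerivAt A (fderiv ℝ A (t, x₁, x₂)) (t, x₁, x₂) :=
    (hAc.differentiable (by simp) (t, x₁, x₂)).hasFDerivAt
  have sym := second_derivative_symmetric hA hA' ((0 : ℝ), (1 : ℝ), (0 : ℝ))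
      ((0 : ℝ), (0 : ℝ), (1 : ℝ))
  have h1 : px1 (px2 f) t x₁ x₂ = fderiv ℝ A (t, x₁, x₂) (0, 1, 0) (0, 0, 1) := by
    have hcl : HasFDerivAt (fun p => A p ((0 : ℝ), (0 : ℝ), (1 : ℝ)))
        (((fderiv ℝ A (t, x₁, x₂)).flip ((0 : ℝ), (0 : ℝ), (1 : ℝ)))) (t, x₁, x₂) := by
      have := hA'.clm_apply (hasFDerivAt_const ((0 : ℝ), (0 : ℝ), (1 : ℝ)) (t, x₁, x₂))
      simpa using this
    have hg : HasDerivAt (fun y : ℝ => (t, y, x₂)) ((0 : ℝ), (1 : ℝ), (0 : ℝ)) x₁ :=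
      (hasDerivAt_const x₁ t).prodMk ((hasDerivAt_id x₁).prodMk (hasDerivAt_const x₁ x₂))
    have hcomp := hcl.comp_hasDerivAt x₁ hg
    rw [Function.comp_def] at hcomp
    have heq : (fun y : ℝ => A (t, y, x₂) ((0 : ℝ), (0 : ℝ), (1 : ℝ)))
        = fun y => px2 f t y x₂ :=
      funext fun y => ((slice_2 hf t y x₂).deriv).symm
    rw [heq] at hcomp
    simpa [px1, ContinuousLinearMap.flip_apply] using hcomp.deriv
  have h2 : px2 (px1 f) t x₁ x₂ = fderiv ℝ A (t, x₁, x₂) (0, 0, 1) (0, 1, 0) := by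
    have hcl : HasFDerivAt (fun p => A p ((0 : ℝ), (1 : ℝ), (0 : ℝ)))
        (((fderiv ℝ A (t, x₁, x₂)).flip ((0 : ℝ), (1 : ℝ), (0 : ℝ)))) (t, x₁, x₂) := by
      have := hA'.clm_apply (hasFDerivAt_const ((0 : ℝ), (1 : ℝ), (0 : ℝ)) (t, x₁, x₂))
      simpa using this
    have hg : HasDerivAt (fun y : ℝ => (t, x₁, y)) ((0 : ℝ), (0 : ℝ), (1 : ℝ)) x₂ :=
      (hasDerivAt_const x₂ t).prodMk ((hasDerivAt_const x₂ x₁).prodMk (hasDerivAt_id x₂))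
    have hcomp := hcl.comp_hasDerivAt x₂ hg
    rw [Function.comp_def] at hcomp
    have heq : (fun y : ℝ => A (t, x₁, y) ((0 : ℝ), (1 : ℝ), (0 : ℝ)))
        = fun y => px1 f t x₁ y :=
      funext fun y => ((slice_1 hf t x₁ y).deriv).symm
    rw [heq] at hcomp
    simpa [px2, ContinuousLinearMap.flip_apply] using hcomp.deriv
  rw [h1, h2, sym]

lemma cont_slice (hf : ContDiff ℝ (⊤ : ℕ∞) (uc f)) (t : ℝ) :
    Continuous (fun z : ℝ × ℝ => f t z.1 z.2) :=
  hf.continuous.comp (continuous_const.prodMk continuous_id)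

lemma cont_slice1 (hf : ContDiff ℝ (⊤ : ℕ∞) (uc f)) (t x₂ : ℝ) :
    Continuous (fun y : ℝ => f t y x₂) :=
  hf.continuous.comp (continuous_const.prodMk (continuous_id.prodMk continuous_const))

lemma cont_slice2 (hf : ContDiff ℝ (⊤ : ℕ∞) (uc f)) (t x₁ : ℝ) :
    Continuous (fun y : ℝ => f t x₁ y) :=
  hf.continuous.comp (continuous_const.prodMk (continuous_const.prodMk continuous_id))

lemma integrableOn_box {g : ℝ → ℝ → ℝ} (hg : Continuous (fun z : ℝ × ℝ => g z.1 z.2))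
    (a b c d : ℝ) :
    IntegrableOn (fun z : ℝ × ℝ => g z.1 z.2) (Set.Ioc a b ×ˢ Set.Ioc c d) := by
  have hK : IsCompact (Set.Icc a b ×ˢ Set.Icc c d) := isCompact_Icc.prod isCompact_Icc
  exact (hg.continuousOn.integrableOn_compact hK).mono_set
    (Set.prod_mono Set.Ioc_subset_Icc_self Set.Ioc_subset_Icc_self)

lemma integrableOn_box' {g : ℝ → ℝ → ℝ} (hg : Continuous (fun z : ℝ × ℝ => g z.1 z.2))
    (a b c d : ℝ) :
    IntegrableOn (fun z : ℝ × ℝ => g z.1 z.2) (Set.Ioc a b ×ˢ Set.Ioc c d)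
      (volume.prod volume) := by
  rw [← Measure.volume_eq_prod]; exact integrableOn_box hg a b c d

lemma setIntegral_box_eq {g : ℝ → ℝ → ℝ} (hg : Continuous (fun z : ℝ × ℝ => g z.1 z.2))
    {a b c d : ℝ} (hab : a ≤ b) (hcd : c ≤ d) :
    ∫ z in Set.Ioc a b ×ˢ Set.Ioc c d, g z.1 z.2
      = ∫ x in a..b, ∫ y in c..d, g x y := by
  rw [intervalIntegral.integral_of_le hab]
  simp_rw [intervalIntegral.integral_of_le hcd]
  rw [Measure.volume_eq_prod]
  exact setIntegral_prod (fun z => g z.1 z.2) (integrableOn_box' hg a b c d)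

lemma iterated_swap {g : ℝ → ℝ → ℝ} (hg : Continuous (fun z : ℝ × ℝ => g z.1 z.2))
    {a b c d : ℝ} (hab : a ≤ b) (hcd : c ≤ d) :
    ∫ x in a..b, ∫ y in c..d, g x y = ∫ y in c..d, ∫ x in a..b, g x y := by
  rw [intervalIntegral.integral_of_le hab, intervalIntegral.integral_of_le hcd]
  simp_rw [intervalIntegral.integral_of_le hcd, intervalIntegral.integral_of_le hab]
  apply MeasureTheory.integral_integral_swap
  rw [Measure.prod_restrict]
  exact integrableOn_box' hg a b c d

lemma inner_kill {L : ℝ} {q d : ℝ → ℝ} (hper : q L = q 0)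
    (hd : ∀ x, HasDerivAt q (d x) x) (hdc : Continuous d) :
    ∫ x in (0:ℝ)..L, d x = 0 := by
  rw [intervalIntegral.integral_eq_sub_of_hasDerivAt (fun x _ => hd x)
    (hdc.intervalIntegrable 0 L), hper, sub_self]

lemma hasDerivAt_param {g : ℝ → ℝ → ℝ → ℝ} (hg : ContDiff ℝ (⊤ : ℕ∞) (uc g))
    {L : ℝ} (t₀ : ℝ) :
    HasDerivAt (fun t => ∫ z in Set.Ioc 0 L ×ˢ Set.Ioc 0 L, g t z.1 z.2)
      (∫ z in Set.Ioc 0 L ×ˢ Set.Ioc 0 L, pt g t₀ z.1 z.2) t₀ := by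
  set S := Set.Ioc (0:ℝ) L ×ˢ Set.Ioc (0:ℝ) L with hS
  have hSm : MeasurableSet S := measurableSet_Ioc.prod measurableSet_Ioc
  have hSfin : volume S < ⊤ := by
    rw [hS, Measure.volume_eq_prod, Measure.prod_prod]
    exact ENNReal.mul_lt_top measure_Ioc_lt_top measure_Ioc_lt_top
  have hptc : Continuous (uc (pt g)) := (contDiff_pt hg).continuous
  have hK : IsCompact ((Set.Icc (t₀ - 1) (t₀ + 1)) ×ˢ
      (Set.Icc (0:ℝ) L ×ˢ Set.Icc (0:ℝ) L)) :=
    isCompact_Icc.prod (isCompact_Icc.prod isCompact_Icc)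
  obtain ⟨C, hC⟩ := hK.exists_bound_of_continuousOn hptc.continuousOn
  have h_bound : ∀ᵐ z ∂(volume.restrict S), ∀ x ∈ Metric.ball t₀ 1,
      ‖pt g x z.1 z.2‖ ≤ C := by
    refine (ae_restrict_iff' hSm).2 (Filter.Eventually.of_forall ?_)
    intro z hz x hx
    rw [Real.ball_eq_Ioo] at hx
    exact hC (x, z) ⟨Set.Ioo_subset_Icc_self hx,
      ⟨Set.Ioc_subset_Icc_self hz.1, Set.Ioc_subset_Icc_self hz.2⟩⟩
  have h :=
    hasDerivAt_integral_of_dominated_loc_of_deriv_le (μ := volume.restrict S)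
      (F := fun t z => g t z.1 z.2) (F' := fun t z => pt g t z.1 z.2) (x₀ := t₀)
      (bound := fun _ => C) (Metric.ball_mem_nhds t₀ one_pos)
      (Filter.Eventually.of_forall fun t => (cont_slice hg t).aestronglyMeasurable)
      (integrableOn_box (cont_slice hg t₀) 0 L 0 L)
      ((cont_slice (contDiff_pt hg) t₀).aestronglyMeasurable)
      h_bound
      (integrableOn_const hSfin.ne)
      (Filter.Eventually.of_forall fun z x _ => hasDerivAt_pt hg x z.1 z.2)
  exact h.2

end DriftAux

open DriftAux MeasureTheory Set in
/-- For any classical solution of the bi-temperature drift-fluid system on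
`[0,∞)`, the difference of the squared `L²(Q)` distances of the hot and cold
densities to the good-curvature equilibrium profiles
`μ^{good} = (x₁/L, 1 − x₁/L)` is conserved in time. -/
theorem difference_of_enstrophies_conserved
    (L Tp Tm : ℝ) (hL : 0 < L) (hTm : 0 < Tm) (hT : Tm < Tp)
    (ρp ρm V : ℝ → ℝ → ℝ → ℝ)
    (hsol : IsClassicalSolution L Tp Tm (Set.Ici 0) ρp ρm V) :
    ∀ t : ℝ, 0 ≤ t →
      ((∫ x₁ in (0 : ℝ)..L, ∫ x₂ in (0 : ℝ)..L, (ρp t x₁ x₂ - x₁ / L) ^ 2)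
        - ∫ x₁ in (0 : ℝ)..L, ∫ x₂ in (0 : ℝ)..L,
            (ρm t x₁ x₂ - (1 - x₁ / L)) ^ 2)
      = ((∫ x₁ in (0 : ℝ)..L, ∫ x₂ in (0 : ℝ)..L, (ρp 0 x₁ x₂ - x₁ / L) ^ 2)
        - ∫ x₁ in (0 : ℝ)..L, ∫ x₂ in (0 : ℝ)..L,
            (ρm 0 x₁ x₂ - (1 - x₁ / L)) ^ 2) := by
  obtain ⟨hρp, hρm, hV, hperp, hperm, hperV, pdeP, pdeM, hpois, hbc⟩ := hsol
  have hL' : (0:ℝ) ≤ L := hL.le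
  have hLne : L ≠ 0 := ne_of_gt hL
  have hW1c : ContDiff ℝ (⊤ : ℕ∞) (uc (px1 V)) := contDiff_px1 hV
  have hW2c : ContDiff ℝ (⊤ : ℕ∞) (uc (px2 V)) := contDiff_px2 hV
  have hx21 : ContDiff ℝ (⊤ : ℕ∞) (fun p : ℝ × ℝ × ℝ => p.2.1) :=
    contDiff_fst.comp contDiff_snd
  set G : ℝ → ℝ → ℝ → ℝ :=
    fun t x₁ x₂ => (ρp t x₁ x₂ - x₁ / L) ^ 2 - (ρm t x₁ x₂ - (1 - x₁ / L)) ^ 2 with hGdef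
  have hGc : ContDiff ℝ (⊤ : ℕ∞) (uc G) :=
    ((hρp.sub (hx21.div_const L)).pow 2).sub
      ((hρm.sub (contDiff_const.sub (hx21.div_const L))).pow 2)
  set S : Set (ℝ × ℝ) := Set.Ioc 0 L ×ˢ Set.Ioc 0 L with hSdef
  have hSm : MeasurableSet S := measurableSet_Ioc.prod measurableSet_Ioc
  have cP : ∀ t : ℝ, Continuous (fun z : ℝ × ℝ => (ρp t z.1 z.2 - z.1 / L) ^ 2) :=
    fun t => ((cont_slice hρp t).sub (continuous_fst.div_const L)).pow 2
  have cM : ∀ t : ℝ, Continuous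
      (fun z : ℝ × ℝ => (ρm t z.1 z.2 - (1 - z.1 / L)) ^ 2) :=
    fun t => ((cont_slice hρm t).sub
      (continuous_const.sub (continuous_fst.div_const L))).pow 2
  have conv : ∀ t : ℝ,
      ((∫ x₁ in (0:ℝ)..L, ∫ x₂ in (0:ℝ)..L, (ρp t x₁ x₂ - x₁ / L) ^ 2)
        - ∫ x₁ in (0:ℝ)..L, ∫ x₂ in (0:ℝ)..L, (ρm t x₁ x₂ - (1 - x₁ / L)) ^ 2)
      = ∫ z in S, G t z.1 z.2 := by
    intro t
    have e1 : (∫ x₁ in (0:ℝ)..L, ∫ x₂ in (0:ℝ)..L, (ρp t x₁ x₂ - x₁ / L) ^ 2)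
        = ∫ z in S, (ρp t z.1 z.2 - z.1 / L) ^ 2 :=
      (setIntegral_box_eq (g := fun a b => (ρp t a b - a / L) ^ 2) (cP t) hL' hL').symm
    have e2 : (∫ x₁ in (0:ℝ)..L, ∫ x₂ in (0:ℝ)..L, (ρm t x₁ x₂ - (1 - x₁ / L)) ^ 2)
        = ∫ z in S, (ρm t z.1 z.2 - (1 - z.1 / L)) ^ 2 :=
      (setIntegral_box_eq (g := fun a b => (ρm t a b - (1 - a / L)) ^ 2)
        (cM t) hL' hL').symm
    have i1 : Integrable (fun z : ℝ × ℝ => (ρp t z.1 z.2 - z.1 / L) ^ 2)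
        (volume.restrict S) :=
      integrableOn_box (g := fun a b => (ρp t a b - a / L) ^ 2) (cP t) 0 L 0 L
    have i2 : Integrable (fun z : ℝ × ℝ => (ρm t z.1 z.2 - (1 - z.1 / L)) ^ 2)
        (volume.restrict S) :=
      integrableOn_box (g := fun a b => (ρm t a b - (1 - a / L)) ^ 2) (cM t) 0 L 0 L
    rw [e1, e2, ← integral_sub i1 i2]
  have key : ∀ t₀ : ℝ, t₀ ∈ Set.Ici (0:ℝ) →
      HasDerivAt (fun t => ∫ z in S, G t z.1 z.2) 0 t₀ := by
    intro t₀ ht₀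
    have hD : HasDerivAt (fun t => ∫ z in S, G t z.1 z.2)
        (∫ z in S, pt G t₀ z.1 z.2) t₀ := hasDerivAt_param hGc t₀
    have hzero : ∫ z in S, pt G t₀ z.1 z.2 = 0 := by
      set P : ℝ → ℝ → ℝ → ℝ := fun t x₁ x₂ => px2 V t x₁ x₂ *
          ((ρp t x₁ x₂ - x₁ / L) ^ 2 - (ρm t x₁ x₂ - (1 - x₁ / L)) ^ 2
            - 2 / L * px1 V t x₁ x₂) with hPdef
      set Q : ℝ → ℝ → ℝ → ℝ := fun t x₁ x₂ =>
          Tp * (ρp t x₁ x₂ - x₁ / L) ^ 2 - Tm * (ρm t x₁ x₂ - (1 - x₁ / L)) ^ 2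
            - px1 V t x₁ x₂ *
              ((ρp t x₁ x₂ - x₁ / L) ^ 2 - (ρm t x₁ x₂ - (1 - x₁ / L)) ^ 2)
            + 1 / L * ((px1 V t x₁ x₂) ^ 2 - (px2 V t x₁ x₂) ^ 2) with hQdef
      have hPc : ContDiff ℝ (⊤ : ℕ∞) (uc P) :=
        hW2c.mul ((((hρp.sub (hx21.div_const L)).pow 2).sub
          ((hρm.sub (contDiff_const.sub (hx21.div_const L))).pow 2)).sub
          (contDiff_const.mul hW1c))
      have hQc : ContDiff ℝ (⊤ : ℕ∞) (uc Q) :=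
        (((contDiff_const.mul ((hρp.sub (hx21.div_const L)).pow 2)).sub
          (contDiff_const.mul
            ((hρm.sub (contDiff_const.sub (hx21.div_const L))).pow 2))).sub
          (hW1c.mul (((hρp.sub (hx21.div_const L)).pow 2).sub
            ((hρm.sub (contDiff_const.sub (hx21.div_const L))).pow 2)))).add
          (contDiff_const.mul ((hW1c.pow 2).sub (hW2c.pow 2)))
      have master : ∀ x₁ ∈ Set.Icc (0:ℝ) L, ∀ x₂ : ℝ,
          pt G t₀ x₁ x₂ = px1 P t₀ x₁ x₂ + px2 Q t₀ x₁ x₂ := by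
        intro x₁ hx₁ x₂
        have hfp1 : HasDerivAt (fun y => ρp t₀ y x₂ - y / L)
            (px1 ρp t₀ x₁ x₂ - 1 / L) x₁ :=
          (hasDerivAt_px1 hρp t₀ x₁ x₂).sub ((hasDerivAt_id x₁).div_const L)
        have hfm1 : HasDerivAt (fun y => ρm t₀ y x₂ - (1 - y / L))
            (px1 ρm t₀ x₁ x₂ - (0 - 1 / L)) x₁ :=
          (hasDerivAt_px1 hρm t₀ x₁ x₂).sub
            ((hasDerivAt_const x₁ 1).sub ((hasDerivAt_id x₁).div_const L))
        have hfp2 : HasDerivAt (fun y => ρp t₀ x₁ y - x₁ / L)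
            (px2 ρp t₀ x₁ x₂) x₂ := (hasDerivAt_px2 hρp t₀ x₁ x₂).sub_const _
        have hfm2 : HasDerivAt (fun y => ρm t₀ x₁ y - (1 - x₁ / L))
            (px2 ρm t₀ x₁ x₂) x₂ := (hasDerivAt_px2 hρm t₀ x₁ x₂).sub_const _
        have eG : pt G t₀ x₁ x₂ = _ :=
          ((((hasDerivAt_pt hρp t₀ x₁ x₂).sub_const (x₁ / L)).pow 2).sub
            (((hasDerivAt_pt hρm t₀ x₁ x₂).sub_const (1 - x₁ / L)).pow 2)).deriv
        have eP : px1 P t₀ x₁ x₂ = _ :=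
          ((hasDerivAt_px1 hW2c t₀ x₁ x₂).mul
            (((hfp1.pow 2).sub (hfm1.pow 2)).sub
              ((hasDerivAt_px1 hW1c t₀ x₁ x₂).const_mul (2 / L)))).deriv
        have eQ : px2 Q t₀ x₁ x₂ = _ :=
          (((((hfp2.pow 2).const_mul Tp).sub ((hfm2.pow 2).const_mul Tm)).sub
            ((hasDerivAt_px2 hW1c t₀ x₁ x₂).mul
              ((hfp2.pow 2).sub (hfm2.pow 2)))).add
            ((((hasDerivAt_px2 hW1c t₀ x₁ x₂).pow 2).sub
              ((hasDerivAt_px2 hW2c t₀ x₁ x₂).pow 2)).const_mul (1 / L))).deriv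
        have hRp : pt ρp t₀ x₁ x₂ = Tp * px2 ρp t₀ x₁ x₂
            + px2 V t₀ x₁ x₂ * px1 ρp t₀ x₁ x₂
            - px1 V t₀ x₁ x₂ * px2 ρp t₀ x₁ x₂ := by
          have h := pdeP t₀ ht₀ x₁ hx₁ x₂; linarith
        have hRm : pt ρm t₀ x₁ x₂ = Tm * px2 ρm t₀ x₁ x₂
            + px2 V t₀ x₁ x₂ * px1 ρm t₀ x₁ x₂
            - px1 V t₀ x₁ x₂ * px2 ρm t₀ x₁ x₂ := by
          have h := pdeM t₀ ht₀ x₁ hx₁ x₂; linarith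
        have hsch : px1 (px2 V) t₀ x₁ x₂ = px2 (px1 V) t₀ x₁ x₂ :=
          schwarz hV t₀ x₁ x₂
        have hpo : px1 (px1 V) t₀ x₁ x₂ = 1 - ρp t₀ x₁ x₂ - ρm t₀ x₁ x₂
            - px2 (px2 V) t₀ x₁ x₂ := by
          have h := hpois t₀ ht₀ x₁ hx₁ x₂; linarith
        rw [eG, eP, eQ, hRp, hRm, hsch, hpo]
        norm_num
        field_simp
        ring
      have hEq : Set.EqOn (fun z : ℝ × ℝ => pt G t₀ z.1 z.2)
          (fun z : ℝ × ℝ => px1 P t₀ z.1 z.2 + px2 Q t₀ z.1 z.2) S :=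
        fun z hz => master z.1 (Set.Ioc_subset_Icc_self hz.1) z.2
      have i1 : Integrable (fun z : ℝ × ℝ => px1 P t₀ z.1 z.2)
          (volume.restrict S) :=
        integrableOn_box (g := fun a b => px1 P t₀ a b)
          (cont_slice (contDiff_px1 hPc) t₀) 0 L 0 L
      have i2 : Integrable (fun z : ℝ × ℝ => px2 Q t₀ z.1 z.2)
          (volume.restrict S) :=
        integrableOn_box (g := fun a b => px2 Q t₀ a b)
          (cont_slice (contDiff_px2 hQc) t₀) 0 L 0 L
      rw [setIntegral_congr_fun hSm hEq, integral_add i1 i2]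
      have z1 : ∫ z in S, px1 P t₀ z.1 z.2 = 0 := by
        rw [show (∫ z in S, px1 P t₀ z.1 z.2)
            = ∫ x in (0:ℝ)..L, ∫ y in (0:ℝ)..L, px1 P t₀ x y from
          setIntegral_box_eq (g := fun a b => px1 P t₀ a b)
            (cont_slice (contDiff_px1 hPc) t₀) hL' hL']
        rw [iterated_swap (g := fun a b => px1 P t₀ a b)
          (cont_slice (contDiff_px1 hPc) t₀) hL' hL']
        have hbdry : ∀ x₂ : ℝ, ∫ x in (0:ℝ)..L, px1 P t₀ x x₂ = 0 := by
          intro x₂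
          have b0 : px2 V t₀ 0 x₂ = 0 := by
            have hz : (fun y => V t₀ 0 y) = fun _ => (0:ℝ) :=
              funext fun y => (hbc t₀ ht₀ y).1
            simp only [px2]; rw [hz]; exact deriv_const _ _
          have bL : px2 V t₀ L x₂ = 0 := by
            have hz : (fun y => V t₀ L y) = fun _ => (0:ℝ) :=
              funext fun y => (hbc t₀ ht₀ y).2
            simp only [px2]; rw [hz]; exact deriv_const _ _
          have hper : (fun y => P t₀ y x₂) L = (fun y => P t₀ y x₂) 0 := by
            simp only [hPdef]
            rw [b0, bL]; ring
          exact inner_kill hper (fun x => hasDerivAt_px1 hPc t₀ x x₂)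
            (cont_slice1 (contDiff_px1 hPc) t₀ x₂)
        simp only [hbdry, intervalIntegral.integral_zero]
      have hpw1 : ∀ x₁ x₂ : ℝ, px1 V t₀ x₁ (x₂ + L) = px1 V t₀ x₁ x₂ := by
        intro x₁ x₂
        simp only [px1]; congr 1; funext y; exact hperV t₀ y x₂
      have hpw2 : ∀ x₁ x₂ : ℝ, px2 V t₀ x₁ (x₂ + L) = px2 V t₀ x₁ x₂ := by
        intro x₁ x₂
        simp only [px2]
        rw [← deriv_comp_add_const]
        congr 1; funext y; exact hperV t₀ x₁ y
      have z2 : ∫ z in S, px2 Q t₀ z.1 z.2 = 0 := by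
        rw [show (∫ z in S, px2 Q t₀ z.1 z.2)
            = ∫ x in (0:ℝ)..L, ∫ y in (0:ℝ)..L, px2 Q t₀ x y from
          setIntegral_box_eq (g := fun a b => px2 Q t₀ a b)
            (cont_slice (contDiff_px2 hQc) t₀) hL' hL']
        have hQL : ∀ x₁ : ℝ, (fun y => Q t₀ x₁ y) L = (fun y => Q t₀ x₁ y) 0 := by
          intro x₁
          have h : Q t₀ x₁ (0 + L) = Q t₀ x₁ 0 := by
            simp only [hQdef, hperp, hperm, hpw1, hpw2]
          rwa [zero_add] at h
        have hinn : ∀ x₁ : ℝ, ∫ y in (0:ℝ)..L, px2 Q t₀ x₁ y = 0 := fun x₁ =>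
          inner_kill (hQL x₁) (fun y => hasDerivAt_px2 hQc t₀ x₁ y)
            (cont_slice2 (contDiff_px2 hQc) t₀ x₁)
        simp only [hinn, intervalIntegral.integral_zero]
      rw [z1, z2, add_zero]
    rwa [hzero] at hD
  intro t ht
  rw [conv t, conv 0]
  rcases eq_or_lt_of_le ht with h|h
  · rw [← h]
  · have hdiffOn : DifferentiableOn ℝ (fun τ => ∫ z in S, G τ z.1 z.2)
        (Set.Icc 0 t) :=
      fun s hs => ((key s hs.1).differentiableAt).differentiableWithinAt
    have hderiv : ∀ s ∈ Set.Ico (0:ℝ) t,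
        derivWithin (fun τ => ∫ z in S, G τ z.1 z.2) (Set.Icc 0 t) s = 0 :=
      fun s hs => ((key s hs.1).hasDerivWithinAt).derivWithin
        (uniqueDiffOn_Icc h s ⟨hs.1, hs.2.le⟩)
    exact constant_of_derivWithin_zero hdiffOn hderiv t (Set.right_mem_Icc.2 ht)
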